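/- arXiv:2103.01508 — 2 statements merged into one kernel-verified Lean document; each statement's English description precedes it below -/
import Mathlib

section
/- Let k ≥ 3, let m ≥ 3 be odd, and let n = gr_k(K_3 : K_{1,m}) = (5m-3)/2. In any k-edge-coloring of K_{n-1} with no rainbow triangle and no monochromatic K_{1,m}, any Gallai partition with the smallest number of parts has exactly 5 parts, each of size exactly (m-1)/2. -/
def RainbowTri {V : Type} {k : ℕ} (Adj : V → V → Prop) (c : V → V → Fin k) : Prop :=
  ∃ a b d : V, Adj a b ∧ Adj a d ∧ Adj b d ∧
    c a b ≠ c a d ∧ c a b ≠ c b d ∧ c a d ≠ c b d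

def MonoTri {V : Type} {k : ℕ} (Adj : V → V → Prop) (c : V → V → Fin k) : Prop :=
  ∃ a b d : V, a ≠ b ∧ a ≠ d ∧ b ≠ d ∧ Adj a b ∧ Adj a d ∧ Adj b d ∧
    c a b = c a d ∧ c a d = c b d

def MonoP4 {V : Type} {k : ℕ} (Adj : V → V → Prop) (c : V → V → Fin k) : Prop :=
  ∃ a b d e : V, a ≠ b ∧ a ≠ d ∧ a ≠ e ∧ b ≠ d ∧ b ≠ e ∧ d ≠ e ∧
    Adj a b ∧ Adj b d ∧ Adj d e ∧ c a b = c b d ∧ c b d = c d e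

def MonoC4 {V : Type} {k : ℕ} (Adj : V → V → Prop) (c : V → V → Fin k) : Prop :=
  ∃ a b d e : V, a ≠ b ∧ a ≠ d ∧ a ≠ e ∧ b ≠ d ∧ b ≠ e ∧ d ≠ e ∧
    Adj a b ∧ Adj b d ∧ Adj d e ∧ Adj e a ∧
    c a b = c b d ∧ c b d = c d e ∧ c d e = c e a

def MonoClique {V : Type} {k : ℕ} [DecidableEq V] (Adj : V → V → Prop)
    (c : V → V → Fin k) (p : ℕ) (i : Fin k) : Prop :=
  ∃ S : Finset V, S.card = p ∧ ∀ a ∈ S, ∀ b ∈ S, a ≠ b → Adj a b ∧ c a b = i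

def MonoStar {V : Type} {k : ℕ} [DecidableEq V] (Adj : V → V → Prop)
    (c : V → V → Fin k) (m : ℕ) (i : Fin k) : Prop :=
  ∃ v : V, ∃ S : Finset V, S.card = m ∧ v ∉ S ∧ ∀ u ∈ S, Adj v u ∧ c v u = i

def Full {V : Type} : V → V → Prop := fun a b => a ≠ b

def OAdj {m : ℕ} (A : Finset (Fin m)) : Option (Fin m) → Option (Fin m) → Prop
  | some i, some j => i ≠ j
  | some i, none   => i ∈ A
  | none,   some j => j ∈ A
  | none,   none   => False

def IsGallaiPartition {n k q : ℕ} (c : Fin n → Fin n → Fin k)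
    (P : Fin q → Finset (Fin n)) : Prop :=
  2 ≤ q ∧ (∀ i, (P i).Nonempty) ∧ (∀ i j, i ≠ j → Disjoint (P i) (P j)) ∧
  (∀ x : Fin n, ∃ i, x ∈ P i) ∧
  (∀ i j, i ≠ j → ∃ col : Fin k, ∀ a ∈ P i, ∀ b ∈ P j, c a b = col) ∧
  (∃ c1 c2 : Fin k, ∀ i j, i ≠ j → ∀ a ∈ P i, ∀ b ∈ P j, c a b = c1 ∨ c a b = c2)

def MonoCopy {W V : Type} {k : ℕ} (H : SimpleGraph W) (Adj : V → V → Prop)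
    (c : V → V → Fin k) (i : Fin k) : Prop :=
  ∃ φ : W → V, Function.Injective φ ∧
    ∀ a b, H.Adj a b → Adj (φ a) (φ b) ∧ c (φ a) (φ b) = i

def MonoMergeCopy {W V : Type} {k : ℕ} (H : SimpleGraph W)
    (c : V → V → Fin k) (i : Fin k) : Prop :=
  ∃ φ : W → V, ∀ a b, H.Adj a b → φ a ≠ φ b ∧ c (φ a) (φ b) = i

theorem stmt13 (k m : ℕ) (hk : 3 ≤ k) (hm : 3 ≤ m) (hodd : Odd m)
    (c : Fin ((5 * m - 3) / 2 - 1) → Fin ((5 * m - 3) / 2 - 1) → Fin k)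
    (hsym : ∀ a b, c a b = c b a)
    (hnr : ¬ RainbowTri Full c) (hns : ∀ i, ¬ MonoStar Full c m i)
    {q : ℕ} (P : Fin q → Finset (Fin ((5 * m - 3) / 2 - 1)))
    (hP : IsGallaiPartition c P)
    (hmin : ∀ (q' : ℕ) (P' : Fin q' → Finset (Fin ((5 * m - 3) / 2 - 1))),
      IsGallaiPartition c P' → q ≤ q') :
    q = 5 ∧ ∀ i, (P i).card = (m - 1) / 2 := by
    classical
  obtain ⟨hq2, hne, hdisj, hcov, hcolor, c1, c2, h2col⟩ := hP
  obtain ⟨s, hs⟩ := hodd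
  have hs1 : 1 ≤ s := by omega
  -- pick a representative of each part
  set p : Fin q → Fin ((5 * m - 3) / 2 - 1) := fun i => (hne i).choose with hpdef
  have pick : ∀ i, p i ∈ P i := fun i => (hne i).choose_spec
  have colEq : ∀ i j, i ≠ j → ∀ a ∈ P i, ∀ b ∈ P j, c a b = c (p i) (p j) := by
    intro i j hij a ha b hb
    obtain ⟨col, hcol⟩ := hcolor i j hij
    rw [hcol a ha b hb, hcol (p i) (pick i) (p j) (pick j)]
  -- total count
  have hsum : ∑ i, (P i).card = 5 * s := by
    have h1 : (Finset.univ.biUnion P) = Finset.univ :=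
      Finset.eq_univ_of_forall (fun x => Finset.mem_biUnion.2
        ⟨(hcov x).choose, Finset.mem_univ _, (hcov x).choose_spec⟩)
    have h2 := Finset.card_biUnion (s := (Finset.univ : Finset (Fin q))) (t := P)
      (fun a _ b _ h => hdisj a b h)
    rw [h1, Finset.card_univ, Fintype.card_fin] at h2
    omega
  -- key star lemma
  have key : ∀ (i : Fin q) (J : Finset (Fin q)) (χ : Fin k), i ∉ J →
      (∀ j ∈ J, c (p i) (p j) = χ) → (∑ j ∈ J, (P j).card) ≤ m - 1 := by
    intro i J χ hiJ hJ
    by_contra h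
    push_neg at h
    apply hns χ
    have hcard : (J.biUnion P).card = ∑ j ∈ J, (P j).card :=
      Finset.card_biUnion (fun a _ b _ hab => hdisj a b hab)
    obtain ⟨S, hSsub, hScard⟩ := Finset.exists_subset_card_eq (s := J.biUnion P) (n := m) (by omega)
    refine ⟨p i, S, hScard, ?_, ?_⟩
    · intro hmem
      obtain ⟨j, hjJ, hpj⟩ := Finset.mem_biUnion.1 (hSsub hmem)
      have hij : i ≠ j := fun h => hiJ (h ▸ hjJ)
      exact Finset.disjoint_left.1 (hdisj i j hij) (pick i) hpj
    · intro u hu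
      obtain ⟨j, hjJ, huj⟩ := Finset.mem_biUnion.1 (hSsub hu)
      have hij : i ≠ j := fun h => hiJ (h ▸ hjJ)
      constructor
      · intro h
        exact Finset.disjoint_left.1 (hdisj i j hij) (h ▸ pick i) huj
      · rw [colEq i j hij (p i) (pick i) u huj]; exact hJ j hjJ
  -- upper bound for each part
  have hub : ∀ j : Fin q, (P j).card ≤ m - 1 := by
    intro j
    have h1q : 1 < q := hq2
    by_cases hj : j.val = 0
    · have hij : (⟨1, h1q⟩ : Fin q) ≠ j := by
        intro h; rw [← h] at hj; simp at hj
      have := key ⟨1, h1q⟩ {j} (c (p ⟨1, h1q⟩) (p j)) (by simp [hij])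
        (by intro x hx; rw [Finset.mem_singleton.1 hx])
      simpa using this
    · have hij : (⟨0, by omega⟩ : Fin q) ≠ j := by
        intro h; rw [← h] at hj; simp at hj
      have := key ⟨0, by omega⟩ {j} (c (p ⟨0, by omega⟩) (p j)) (by simp [hij])
        (by intro x hx; rw [Finset.mem_singleton.1 hx])
      simpa using this
  -- lower bound for each part
  have hlow : ∀ i : Fin q, s ≤ (P i).card := by
    intro i
    set J1 := (Finset.univ.erase i).filter (fun j => c (p i) (p j) = c1) with hJ1
    set J2 := (Finset.univ.erase i).filter (fun j => ¬ c (p i) (p j) = c1) with hJ2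
    have h1 : ∑ j ∈ J1, (P j).card ≤ m - 1 := by
      apply key i J1 c1 (by simp [hJ1])
      intro j hj; exact (Finset.mem_filter.1 hj).2
    have h2 : ∑ j ∈ J2, (P j).card ≤ m - 1 := by
      apply key i J2 c2 (by simp [hJ2])
      intro j hj
      have hji : j ≠ i := Finset.ne_of_mem_erase (Finset.mem_filter.1 hj).1
      have := h2col i j hji.symm (p i) (pick i) (p j) (pick j)
      have hnc1 := (Finset.mem_filter.1 hj).2
      tauto
    have hsplit : ∑ j ∈ J1, (P j).card + ∑ j ∈ J2, (P j).card
        = ∑ j ∈ Finset.univ.erase i, (P j).card :=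
      Finset.sum_filter_add_sum_filter_not _ _ _
    have htot : (P i).card + ∑ j ∈ Finset.univ.erase i, (P j).card = ∑ j, (P j).card :=
      Finset.add_sum_erase _ (fun j => (P j).card) (Finset.mem_univ i)
    omega
  -- q ≤ 5
  have hq5 : q ≤ 5 := by
    have h : q * s ≤ 5 * s := by
      have h1 : ∑ _i : Fin q, s ≤ ∑ i, (P i).card := Finset.sum_le_sum (fun i _ => hlow i)
      rw [Finset.sum_const, Finset.card_univ, Fintype.card_fin, smul_eq_mul] at h1
      omega
    exact Nat.le_of_mul_le_mul_right h hs1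
  -- pair and triple versions of the key lemma
  have pairKey : ∀ i j l : Fin q, i ≠ j → i ≠ l → j ≠ l →
      c (p i) (p j) = c (p i) (p l) → (P j).card + (P l).card ≤ m - 1 := by
    intro i j l hij hil hjl he
    have h := key i {j, l} (c (p i) (p j)) (by simp [hij, hil]) ?_
    · rwa [Finset.sum_pair hjl] at h
    · intro x hx
      rcases Finset.mem_insert.1 hx with h | h
      · rw [h]
      · rw [Finset.mem_singleton.1 h]; exact he.symm
  have tripleKey : ∀ i j l t : Fin q, i ≠ j → i ≠ l → i ≠ t → j ≠ l → j ≠ t → l ≠ t →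
      c (p i) (p j) = c (p i) (p l) → c (p i) (p j) = c (p i) (p t) →
      (P j).card + (P l).card + (P t).card ≤ m - 1 := by
    intro i j l t hij hil hit hjl hjt hlt he1 he2
    have h := key i {j, l, t} (c (p i) (p j)) (by simp [hij, hil, hit]) ?_
    · rwa [Finset.sum_insert (by simp [hjl, hjt]), Finset.sum_pair hlt, ← Nat.add_assoc] at h
    · intro x hx
      rcases Finset.mem_insert.1 hx with h | h
      · rw [h]
      · rcases Finset.mem_insert.1 h with h | h
        · rw [h]; exact he1.symm
        · rw [Finset.mem_singleton.1 h]; exact he2.symm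
  clear hmin hnr hcolor hcov
  interval_cases q
  -- q = 2
  · exfalso
    rw [Fin.sum_univ_two] at hsum
    have h0 := hub 0
    have h1 := hub 1
    omega
  -- q = 3
  · exfalso
    rw [Fin.sum_univ_three] at hsum
    have m01 := h2col 0 1 (by decide) (p 0) (pick 0) (p 1) (pick 1)
    have m02 := h2col 0 2 (by decide) (p 0) (pick 0) (p 2) (pick 2)
    have m12 := h2col 1 2 (by decide) (p 1) (pick 1) (p 2) (pick 2)
    have hcase : c (p 0) (p 1) = c (p 0) (p 2) ∨ c (p 0) (p 1) = c (p 1) (p 2)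
        ∨ c (p 0) (p 2) = c (p 1) (p 2) := by
      rcases m01 with h | h <;> rcases m02 with h' | h' <;> rcases m12 with h'' | h'' <;>
        rw [h, h', h''] <;> simp
    rcases hcase with h | h | h
    · have := pairKey 0 1 2 (by decide) (by decide) (by decide) h
      have := hub 0
      omega
    · have := pairKey 1 0 2 (by decide) (by decide) (by decide)
        (by rw [hsym (p 1) (p 0)]; exact h)
      have := hub 1
      omega
    · have := pairKey 2 0 1 (by decide) (by decide) (by decide)
        (by rw [hsym (p 2) (p 0), hsym (p 2) (p 1)]; exact h)
      have := hub 2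
      omega
  -- q = 4
  · exfalso
    rw [Fin.sum_univ_four] at hsum
    have core : ∀ w x y z : Fin 4, w ≠ x → w ≠ y → w ≠ z → x ≠ y → x ≠ z → y ≠ z →
        c (p w) (p x) = c (p w) (p y) → False := by
      intro w x y z hwx hwy hwz hxy hxz hyz heq
      have hperm : (P w).card + (P x).card + (P y).card + (P z).card = 5 * s := by
        have huniv4 : ({w, x, y, z} : Finset (Fin 4)) = Finset.univ := by
          apply Finset.eq_univ_of_card
          rw [Finset.card_insert_of_notMem (by simp [hwx, hwy, hwz]),
            Finset.card_insert_of_notMem (by simp [hxy, hxz]),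
            Finset.card_pair hyz]
          decide
        have h := hsum
        calc (P w).card + (P x).card + (P y).card + (P z).card
            = ∑ j ∈ ({w, x, y, z} : Finset (Fin 4)), (P j).card := by
              rw [Finset.sum_insert (by simp [hwx, hwy, hwz]),
                Finset.sum_insert (by simp [hxy, hxz]), Finset.sum_pair hyz]
              ring
          _ = ∑ j : Fin 4, (P j).card := by rw [huniv4]
          _ = 5 * s := by rw [Fin.sum_univ_four]; omega
      have h1 : (P x).card + (P y).card ≤ m - 1 := pairKey w x y hwx hwy hxy heq
      by_cases e1 : c (p x) (p z) = c (p w) (p x)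
      · have h2 : (P w).card + (P z).card ≤ m - 1 := by
          apply pairKey x w z hwx.symm hxz hwz
          rw [hsym (p x) (p w)]; exact e1.symm
        omega
      by_cases e2 : c (p y) (p z) = c (p w) (p x)
      · have h2 : (P w).card + (P z).card ≤ m - 1 := by
          apply pairKey y w z hwy.symm hyz hwz
          rw [hsym (p y) (p w), ← heq]; exact e2.symm
        omega
      by_cases e3 : c (p w) (p z) = c (p w) (p x)
      · have h3 : (P x).card + (P y).card + (P z).card ≤ m - 1 :=
          tripleKey w x y z hwx hwy hwz hxy hxz hyz heq e3.symm
        have h4 := hub w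
        omega
      · have hA := h2col z w hwz.symm (p z) (pick z) (p w) (pick w)
        have hB := h2col z x hxz.symm (p z) (pick z) (p x) (pick x)
        have hC := h2col z y hyz.symm (p z) (pick z) (p y) (pick y)
        have hX := h2col w x hwx (p w) (pick w) (p x) (pick x)
        have ne1 : c (p z) (p w) ≠ c (p w) (p x) := by
          rw [hsym (p z) (p w)]; exact e3
        have ne2 : c (p z) (p x) ≠ c (p w) (p x) := by
          rw [hsym (p z) (p x)]; exact e1
        have ne3 : c (p z) (p y) ≠ c (p w) (p x) := by
          rw [hsym (p z) (p y)]; exact e2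
        have heqs : c (p z) (p w) = c (p z) (p x) ∧ c (p z) (p w) = c (p z) (p y) := by
          rcases hX with hx1 | hx1
          · rw [hx1] at ne1 ne2 ne3
            rw [hA.resolve_left ne1, hB.resolve_left ne2, hC.resolve_left ne3]
            exact ⟨rfl, rfl⟩
          · rw [hx1] at ne1 ne2 ne3
            rw [hA.resolve_right ne1, hB.resolve_right ne2, hC.resolve_right ne3]
            exact ⟨rfl, rfl⟩
        have h3 : (P w).card + (P x).card + (P y).card ≤ m - 1 :=
          tripleKey z w x y hwz.symm hxz.symm hyz.symm hwx hwy hxy heqs.1 heqs.2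
        have h4 := hub z
        omega
    have m01 := h2col 0 1 (by decide) (p 0) (pick 0) (p 1) (pick 1)
    have m02 := h2col 0 2 (by decide) (p 0) (pick 0) (p 2) (pick 2)
    have m03 := h2col 0 3 (by decide) (p 0) (pick 0) (p 3) (pick 3)
    have hcase : c (p 0) (p 1) = c (p 0) (p 2) ∨ c (p 0) (p 1) = c (p 0) (p 3)
        ∨ c (p 0) (p 2) = c (p 0) (p 3) := by
      rcases m01 with h | h <;> rcases m02 with h' | h' <;> rcases m03 with h'' | h'' <;>
        rw [h, h', h''] <;> simp
    rcases hcase with h | h | h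
    · exact core 0 1 2 3 (by decide) (by decide) (by decide) (by decide) (by decide)
        (by decide) h
    · exact core 0 1 3 2 (by decide) (by decide) (by decide) (by decide) (by decide)
        (by decide) h
    · exact core 0 2 3 1 (by decide) (by decide) (by decide) (by decide) (by decide)
        (by decide) h
  -- q = 5
  · refine ⟨rfl, ?_⟩
    have hup : ∀ i : Fin 5, (P i).card ≤ s := by
      intro i
      have h1 : (P i).card + ∑ j ∈ Finset.univ.erase i, (P j).card = ∑ j, (P j).card :=
        Finset.add_sum_erase _ (fun j => (P j).card) (Finset.mem_univ i)
      have h2 : ∑ _j ∈ Finset.univ.erase i, s ≤ ∑ j ∈ Finset.univ.erase i, (P j).card :=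
        Finset.sum_le_sum (fun j _ => hlow j)
      rw [Finset.sum_const, smul_eq_mul, Finset.card_erase_of_mem (Finset.mem_univ i),
        Finset.card_univ, Fintype.card_fin] at h2
      omega
    intro i
    have := hlow i
    have := hup i
    omega
end

section
/- For every k ≥ 3 and odd m ≥ 3, the star-critical Gallai-Ramsey number gr_k^*(K_3 : K_{1,m}) equals m. -/
set_option linter.unusedSectionVars false
set_option linter.unusedVariables false
set_option maxHeartbeats 4000000

namespace GR

variable {V : Type} [DecidableEq V] {k : ℕ}

variable {V : Type} [DecidableEq V] {k : ℕ}

def pairMono (c : V → V → Fin k) (p q : Finset V) : Prop :=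
  ∃ col, ∀ a ∈ p, ∀ b ∈ q, c a b = col

def GallaiOn (c : V → V → Fin k) (S : Finset V) : Prop :=
  ∀ a ∈ S, ∀ b ∈ S, ∀ d ∈ S, a ≠ b → a ≠ d → b ≠ d →
    c a b = c a d ∨ c a b = c b d ∨ c a d = c b d

def GoodPart (c : V → V → Fin k) (S : Finset V) (P : Finset (Finset V)) : Prop :=
  2 ≤ P.card ∧ (∀ p ∈ P, p.Nonempty ∧ p ⊆ S) ∧
  (∀ p ∈ P, ∀ q ∈ P, p ≠ q → Disjoint p q) ∧
  (∀ x ∈ S, ∃ p ∈ P, x ∈ p) ∧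
  (∀ p ∈ P, ∀ q ∈ P, p ≠ q → pairMono c p q) ∧
  (∃ x y : Fin k, ∀ p ∈ P, ∀ q ∈ P, p ≠ q → ∀ a ∈ p, ∀ b ∈ q, c a b = x ∨ c a b = y)

section L1

variable (c : V → V → Fin k) (S : Finset V) (x y : Fin k)

def stepR (a b : V) : Prop := a ∈ S ∧ b ∈ S ∧ a ≠ b ∧ c a b ≠ x ∧ c a b ≠ y

def Rel : V → V → Prop := Relation.ReflTransGen (stepR c S x y)

variable {c S x y}

lemma stepR_symm (hsym : ∀ a b, c a b = c b a) : Symmetric (stepR c S x y) := by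
  rintro a b ⟨h1, h2, h3, h4, h5⟩
  exact ⟨h2, h1, h3.symm, by rwa [hsym b a], by rwa [hsym b a]⟩

lemma Rel_symm (hsym : ∀ a b, c a b = c b a) : Symmetric (Rel c S x y) :=
  by
    haveI : Std.Symm (stepR c S x y) := ⟨fun a b h => stepR_symm hsym h⟩
    exact fun a b (h : Relation.ReflTransGen (stepR c S x y) a b) =>
      (Std.Symm.symm a b h : Relation.ReflTransGen (stepR c S x y) b a)

lemma Rel_mem (hsym : ∀ a b, c a b = c b a) {a b : V} (ha : a ∈ S)
    (h : Rel c S x y a b) : b ∈ S := by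
  rcases (Relation.ReflTransGen.cases_tail h) with h' | ⟨u, _, hu⟩
  · exact h' ▸ ha
  · exact hu.2.1

/-- cross edges between non-related vertices are colored x or y -/
lemma cross_col {a b : V} (ha : a ∈ S) (hb : b ∈ S) (hab : a ≠ b)
    (h : ¬ Rel c S x y a b) : c a b = x ∨ c a b = y := by
  by_contra hc
  push_neg at hc
  exact h (Relation.ReflTransGen.single ⟨ha, hb, hab, hc.1, hc.2⟩)

lemma mono1 (hsym : ∀ a b, c a b = c b a) (hg : GallaiOn c S)
    {a0 b : V} (ha0 : a0 ∈ S) (hb : b ∈ S) (hnb : ¬ Rel c S x y a0 b) :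
    ∀ {a : V}, Rel c S x y a0 a → c a b = c a0 b := by
  intro a h
  induction h with
  | refl => rfl
  | tail hpath hstep ih =>
    rename_i a' a''
    obtain ⟨ha'S, ha''S, hne, hcx, hcy⟩ := hstep
    have ha'b : ¬ Rel c S x y a' b := fun hr => hnb (hpath.trans hr)
    have ha''b : ¬ Rel c S x y a'' b :=
      fun hr => hnb ((hpath.tail ⟨ha'S, ha''S, hne, hcx, hcy⟩).trans hr)
    have hne1 : a' ≠ b := fun h => ha'b (h ▸ Relation.ReflTransGen.refl)
    have hne2 : a'' ≠ b := fun h => ha''b (h ▸ Relation.ReflTransGen.refl)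
    have hc1 := cross_col ha'S hb hne1 ha'b
    have hc2 := cross_col ha''S hb hne2 ha''b
    have := hg a' ha'S a'' ha''S b hb hne hne1 hne2
    rcases this with h | h | h
    · rcases hc1 with h' | h' <;> rw [h'] at h
      · exact absurd h hcx
      · exact absurd h hcy
    · rcases hc2 with h' | h' <;> rw [h'] at h
      · exact absurd h hcx
      · exact absurd h hcy
    · rw [← h, ih]

lemma mono_main (hsym : ∀ a b, c a b = c b a) (hg : GallaiOn c S)
    {a0 b0 : V} (ha0 : a0 ∈ S) (hb0 : b0 ∈ S) (hn : ¬ Rel c S x y a0 b0) :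
    ∀ {a b : V}, Rel c S x y a0 a → Rel c S x y b0 b → c a b = c a0 b0 := by
  intro a b ha hbb
  have hbS : b ∈ S := Rel_mem hsym hb0 hbb
  have haS : a ∈ S := Rel_mem hsym ha0 ha
  have hnab : ¬ Rel c S x y a0 b := fun hr => hn (hr.trans (Rel_symm hsym hbb))
  have h1 : c a b = c a0 b := mono1 hsym hg ha0 hbS hnab ha
  have hnb : ¬ Rel c S x y b0 a0 := fun hr => hn ((Rel_symm hsym) hr)
  have h2 : c b a0 = c b0 a0 := mono1 hsym hg hb0 ha0 hnb hbb
  rw [h1, hsym a0 b, h2, hsym b0 a0]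

noncomputable def comp (c : V → V → Fin k) (S : Finset V) (x y : Fin k) (a : V) : Finset V :=
  @Finset.filter _ (fun b => Rel c S x y a b) (Classical.decPred _) S

lemma mem_comp {a b : V} : b ∈ comp c S x y a ↔ b ∈ S ∧ Rel c S x y a b := by
  simp [comp]

lemma comp_eq (hsym : ∀ a b, c a b = c b a) {a b : V} (h : Rel c S x y a b) :
    comp c S x y a = comp c S x y b := by
  ext w
  simp only [mem_comp]
  exact ⟨fun ⟨hw, hr⟩ => ⟨hw, ((Rel_symm hsym) h).trans hr⟩,
    fun ⟨hw, hr⟩ => ⟨hw, h.trans hr⟩⟩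

lemma L1 (hsym : ∀ a b, c a b = c b a) (hg : GallaiOn c S)
    {a0 b0 : V} (ha0 : a0 ∈ S) (hb0 : b0 ∈ S) (hnr : ¬ Rel c S x y a0 b0) :
    ∃ P, GoodPart c S P := by
  classical
  refine ⟨S.image (fun a => comp c S x y a), ?_, ?_, ?_, ?_, ?_, ?_⟩
  · -- card ≥ 2
    show 1 < _
    rw [Finset.one_lt_card]
    refine ⟨comp c S x y a0, Finset.mem_image_of_mem _ ha0,
      comp c S x y b0, Finset.mem_image_of_mem _ hb0, ?_⟩
    intro h
    have : b0 ∈ comp c S x y a0 := by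
      rw [h, mem_comp]; exact ⟨hb0, Relation.ReflTransGen.refl⟩
    exact hnr (mem_comp.mp this).2
  · rintro p hp
    obtain ⟨a, ha, rfl⟩ := Finset.mem_image.mp hp
    exact ⟨⟨a, mem_comp.mpr ⟨ha, Relation.ReflTransGen.refl⟩⟩, Finset.filter_subset _ _⟩
  · rintro p hp q hq hne
    obtain ⟨a, ha, rfl⟩ := Finset.mem_image.mp hp
    obtain ⟨b, hb, rfl⟩ := Finset.mem_image.mp hq
    rw [Finset.disjoint_left]
    intro w hw hw'
    exact hne (by rw [comp_eq hsym (mem_comp.mp hw).2, ← comp_eq hsym (mem_comp.mp hw').2])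
  · intro z hz
    exact ⟨comp c S x y z, Finset.mem_image_of_mem _ hz,
      mem_comp.mpr ⟨hz, Relation.ReflTransGen.refl⟩⟩
  · rintro p hp q hq hne
    obtain ⟨a, ha, rfl⟩ := Finset.mem_image.mp hp
    obtain ⟨b, hb, rfl⟩ := Finset.mem_image.mp hq
    have hnr' : ¬ Rel c S x y a b := fun hr => hne (comp_eq hsym hr)
    refine ⟨c a b, ?_⟩
    intro u hu w hw
    exact mono_main hsym hg ha hb hnr' (mem_comp.mp hu).2 (mem_comp.mp hw).2
  · refine ⟨x, y, ?_⟩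
    rintro p hp q hq hne u hu w hw
    obtain ⟨a, ha, rfl⟩ := Finset.mem_image.mp hp
    obtain ⟨b, hb, rfl⟩ := Finset.mem_image.mp hq
    obtain ⟨huS, hru⟩ := mem_comp.mp hu
    obtain ⟨hwS, hrw⟩ := mem_comp.mp hw
    have hnr' : ¬ Rel c S x y u w := by
      intro hr
      exact hne (by rw [comp_eq hsym hru, comp_eq hsym hr, ← comp_eq hsym hrw])
    have hneq : u ≠ w := by
      rintro rfl
      exact hnr' Relation.ReflTransGen.refl
    exact cross_col huS hwS hneq hnr'

end L1

lemma GallaiOn.mono {c : V → V → Fin k} {S T : Finset V} (h : GallaiOn c S) (hsub : T ⊆ S) :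
    GallaiOn c T := fun a ha b hb d hd => h a (hsub ha) b (hsub hb) d (hsub hd)


theorem gallai_thm (c : V → V → Fin k) (hsym : ∀ a b, c a b = c b a) :
    ∀ (n : ℕ) (S : Finset V), S.card ≤ n → 2 ≤ S.card → GallaiOn c S →
    ∃ P, GoodPart c S P := by
  intro n
  induction n with
  | zero => intro S h h2 _; omega
  | succ n ih =>
    intro S hle h2 hg
    classical
    obtain ⟨v, hv⟩ : ∃ v, v ∈ S := (Finset.card_pos.mp (by omega : 0 < S.card))
    set S' := S.erase v with hS'def
    have hvS' : v ∉ S' := Finset.notMem_erase v S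
    have hS'sub : S' ⊆ S := Finset.erase_subset v S
    have hcard' : S'.card = S.card - 1 := Finset.card_erase_of_mem hv
    have hS'pos : 1 ≤ S'.card := by omega
    by_cases h2c : ∃ x y : Fin k, ∀ z ∈ S', c v z = x ∨ c v z = y
    · obtain ⟨x, y, hxy⟩ := h2c
      obtain ⟨b0, hb0⟩ : ∃ b0, b0 ∈ S' := (Finset.card_pos.mp (by omega : 0 < S'.card))
      have hnr : ¬ Relation.ReflTransGen
          (fun a b => a ∈ S ∧ b ∈ S ∧ a ≠ b ∧ c a b ≠ x ∧ c a b ≠ y) v b0 := by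
        intro hr
        rcases Relation.ReflTransGen.cases_head hr with h' | ⟨w, hw, _⟩
        · exact (Finset.ne_of_mem_erase hb0) h'.symm
        · obtain ⟨_, hwS, hvw, hcx, hcy⟩ := hw
          have hwS' : w ∈ S' := Finset.mem_erase.mpr ⟨fun h => hvw h.symm, hwS⟩
          rcases hxy w hwS' with h | h
          · exact hcx h
          · exact hcy h
      exact L1 hsym hg hv (hS'sub hb0) hnr
    · -- v uses at least 3 colors; recurse on S'
      have hS'2 : 2 ≤ S'.card := by
        by_contra hlt
        obtain ⟨z, hz⟩ : ∃ z, z ∈ S' := (Finset.card_pos.mp (by omega : 0 < S'.card))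
        apply h2c
        refine ⟨c v z, c v z, ?_⟩
        intro w hw
        have : w = z := by
          by_contra hne
          have : 2 ≤ S'.card := Finset.one_lt_card.mpr ⟨w, hw, z, hz, hne⟩
          omega
        subst this; left; rfl
      obtain ⟨P', hP'⟩ := ih S' (by omega) hS'2 (hg.mono hS'sub)
      obtain ⟨hcardP, hparts, hdisj, hcover, hmono, r, b, hcols⟩ := hP'
      push_neg at h2c
      obtain ⟨z0, hz0, hz0r, hz0b⟩ := h2c r b
      set γ := c v z0 with hγdef
      have hz0S : z0 ∈ S := hS'sub hz0
      set Pg : Finset (Finset V) := P'.filter (fun p => ∃ u ∈ p, c v u = γ) with hPgdef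
      have hPgsub : Pg ⊆ P' := Finset.filter_subset _ _
      -- z0's part
      obtain ⟨p0, hp0P, hz0p0⟩ := hcover z0 hz0
      have hp0Pg : p0 ∈ Pg := Finset.mem_filter.mpr ⟨hp0P, z0, hz0p0, rfl⟩
      have hvne : ∀ z ∈ S', v ≠ z := by
        intro z hz h; exact hvS' (h ▸ hz)
      -- dichotomy d1
      have d1 : ∀ w1 ∈ Pg, ∀ q ∈ P', q ≠ w1 → ∀ z ∈ q, c v z ≠ γ →
          ∀ u ∈ w1, c z u = c v z := by
        intro w1 hw1 q hq hne z hzq hzγ u hu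
        obtain ⟨hw1P, u0, hu0, hu0γ⟩ := Finset.mem_filter.mp hw1
        obtain ⟨ρ, hρ⟩ := hmono q hq w1 hw1P hne
        have hρrb : ρ = r ∨ ρ = b := by
          have := hcols q hq w1 hw1P hne z hzq u0 hu0
          rwa [hρ z hzq u0 hu0] at this
        have hzS' : z ∈ S' := ((hparts q hq).2) hzq
        have hu0S' : u0 ∈ S' := ((hparts w1 hw1P).2) hu0
        have hzu0 : z ≠ u0 := by
          intro h
          exact (Finset.disjoint_left.mp (hdisj q hq w1 hw1P hne) hzq) (h ▸ hu0)
        have htri := hg v hv u0 (hS'sub hu0S') z (hS'sub hzS')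
          (hvne u0 hu0S') (hvne z hzS') (fun h => hzu0 h.symm)
        rcases htri with h | h | h
        · rw [hu0γ] at h; exact absurd h.symm hzγ
        · rw [hu0γ] at h
          have : c u0 z = ρ := by rw [hsym u0 z]; exact hρ z hzq u0 hu0
          rw [this] at h
          rcases hρrb with h' | h'
          · exact absurd (h.trans h') hz0r
          · exact absurd (h.trans h') hz0b
        · have : c u0 z = ρ := by rw [hsym u0 z]; exact hρ z hzq u0 hu0
          rw [this] at h
          rw [hρ z hzq u hu, ← h]
      -- d2 : some part is not in Pg
      have d2 : ∃ q ∈ P', q ∉ Pg := by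
        by_contra hall
        push_neg at hall
        obtain ⟨z1, hz1, hz1γ, -⟩ := h2c γ γ
        obtain ⟨z2, hz2, hz2γ, hz2d⟩ := h2c γ (c v z1)
        obtain ⟨qz, hqzP, hz2qz⟩ := hcover z2 hz2
        obtain ⟨q1, hq1P, hz1q1⟩ := hcover z1 hz1
        apply hz2d
        by_cases hqq : qz = q1
        · obtain ⟨w', hw', hw'ne⟩ := Finset.exists_mem_ne hcardP qz
          have hw'Pg : w' ∈ Pg := hall w' hw'
          obtain ⟨u', hu'⟩ := (hparts w' hw').1
          have e1 : c z2 u' = c v z2 :=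
            d1 w' hw'Pg qz hqzP (fun h => hw'ne h.symm) z2 hz2qz hz2γ u' hu'
          have e2 : c z1 u' = c v z1 := by
            refine d1 w' hw'Pg qz hqzP (fun h => hw'ne h.symm) z1 ?_ hz1γ u' hu'
            rw [hqq]; exact hz1q1
          obtain ⟨col, hcol⟩ := hmono qz hqzP w' hw' (fun h => hw'ne h.symm)
          have f1 := hcol z2 hz2qz u' hu'
          have f2 : c z1 u' = col := by
            refine hcol z1 ?_ u' hu'
            rw [hqq]; exact hz1q1
          rw [← e1, ← e2, f1, f2]
        · have e1 : c z2 z1 = c v z2 :=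
            d1 q1 (hall q1 hq1P) qz hqzP hqq z2 hz2qz hz2γ z1 hz1q1
          have e2 : c z1 z2 = c v z1 :=
            d1 qz (hall qz hqzP) q1 hq1P (fun h => hqq h.symm) z1 hz1q1 hz1γ z2 hz2qz
          rw [← e1, hsym z2 z1, e2]
      -- d3 : the partition
      obtain ⟨q0, hq0P, hq0n⟩ := d2
      set U : Finset V := Pg.biUnion id with hUdef
      set B : Finset V := insert v U with hBdef
      have hUS' : U ⊆ S' := by
        intro w hw
        obtain ⟨p, hp, hwp⟩ := Finset.mem_biUnion.mp hw
        exact (hparts p (hPgsub hp)).2 hwp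
      have hvU : v ∉ U := fun h => hvS' (hUS' h)
      have hBnotold : ∀ q ∈ P', B ≠ q := by
        intro q hq h
        exact hvS' ((hparts q hq).2 (h ▸ Finset.mem_insert_self v U))
      have hq0mem : q0 ∈ P' \ Pg := Finset.mem_sdiff.mpr ⟨hq0P, hq0n⟩
      have hnoγ : ∀ q ∈ P', q ∉ Pg → ∀ z ∈ q, c v z ≠ γ := by
        intro q hq hqn z hz hcz
        exact hqn (Finset.mem_filter.mpr ⟨hq, z, hz, hcz⟩)
      -- core mono property from outside parts to B
      have hcore : ∀ q ∈ P', q ∉ Pg → ∀ z ∈ q, ∀ a ∈ B, c z a = c v z := by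
        intro q hq hqn z hz a ha
        rcases Finset.mem_insert.mp ha with rfl | haU
        · exact hsym z a
        · obtain ⟨w1, hw1, haw1⟩ := Finset.mem_biUnion.mp haU
          have hqw1 : q ≠ w1 := fun h => hqn (h ▸ hw1)
          exact d1 w1 hw1 q hq hqw1 z hz (hnoγ q hq hqn z hz) a haw1
      -- uniformity of c v z over z ∈ q
      have huni : ∀ q ∈ P', q ∉ Pg → ∃ col, (col = r ∨ col = b) ∧ ∀ z ∈ q, c v z = col := by
        intro q hq hqn
        have hp0P' := hPgsub hp0Pg
        have hqp0 : q ≠ p0 := fun h => hqn (h ▸ hp0Pg)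
        obtain ⟨col, hcol⟩ := hmono q hq p0 hp0P' hqp0
        refine ⟨col, ?_, ?_⟩
        · obtain ⟨z, hz⟩ := (hparts q hq).1
          have := hcols q hq p0 hp0P' hqp0 z hz z0 hz0p0
          rwa [hcol z hz z0 hz0p0] at this
        · intro z hz
          have e1 : c z z0 = c v z := d1 p0 hp0Pg q hq hqp0 z hz (hnoγ q hq hqn z hz) z0 hz0p0
          rw [← e1]; exact hcol z hz z0 hz0p0
      refine ⟨insert B (P' \ Pg), ?_, ?_, ?_, ?_, ?_, ?_⟩
      · rw [Finset.card_insert_of_notMem (fun h => hBnotold B ((Finset.mem_sdiff.mp h).1) rfl)]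
        have : 1 ≤ (P' \ Pg).card := Finset.card_pos.mpr ⟨q0, hq0mem⟩
        omega
      · intro p hp
        rcases Finset.mem_insert.mp hp with rfl | hpold
        · exact ⟨⟨v, Finset.mem_insert_self v U⟩, by
            intro w hw
            rcases Finset.mem_insert.mp hw with rfl | hwU
            · exact hv
            · exact hS'sub (hUS' hwU)⟩
        · obtain ⟨hpP, -⟩ := Finset.mem_sdiff.mp hpold
          exact ⟨(hparts p hpP).1, fun w hw => hS'sub ((hparts p hpP).2 hw)⟩
      · intro p hp q hq hne
        rcases Finset.mem_insert.mp hp with rfl | hpold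
        · rcases Finset.mem_insert.mp hq with rfl | hqold
          · exact absurd rfl hne
          · obtain ⟨hqP, hqn⟩ := Finset.mem_sdiff.mp hqold
            rw [Finset.disjoint_left]
            intro w hw hwq
            rcases Finset.mem_insert.mp hw with rfl | hwU
            · exact hvS' ((hparts q hqP).2 hwq)
            · obtain ⟨w1, hw1, hww1⟩ := Finset.mem_biUnion.mp hwU
              have hqw1 : w1 ≠ q := fun h => hqn (h ▸ hw1)
              exact Finset.disjoint_left.mp
                (hdisj w1 (hPgsub hw1) q hqP hqw1) hww1 hwq
        · rcases Finset.mem_insert.mp hq with rfl | hqold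
          · obtain ⟨hpP, hpn⟩ := Finset.mem_sdiff.mp hpold
            rw [Finset.disjoint_right]
            intro w hw hwp
            rcases Finset.mem_insert.mp hw with rfl | hwU
            · exact hvS' ((hparts p hpP).2 hwp)
            · obtain ⟨w1, hw1, hww1⟩ := Finset.mem_biUnion.mp hwU
              have hpw1 : w1 ≠ p := fun h => hpn (h ▸ hw1)
              exact Finset.disjoint_left.mp
                (hdisj w1 (hPgsub hw1) p hpP hpw1) hww1 hwp
          · exact hdisj p ((Finset.mem_sdiff.mp hpold).1) q ((Finset.mem_sdiff.mp hqold).1) hne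
      · intro z hz
        by_cases hzv : z = v
        · exact ⟨B, Finset.mem_insert_self _ _, hzv ▸ Finset.mem_insert_self v U⟩
        · have hzS' : z ∈ S' := Finset.mem_erase.mpr ⟨hzv, hz⟩
          obtain ⟨p, hpP, hzp⟩ := hcover z hzS'
          by_cases hpPg : p ∈ Pg
          · exact ⟨B, Finset.mem_insert_self _ _,
              Finset.mem_insert_of_mem (Finset.mem_biUnion.mpr ⟨p, hpPg, hzp⟩)⟩
          · exact ⟨p, Finset.mem_insert_of_mem (Finset.mem_sdiff.mpr ⟨hpP, hpPg⟩), hzp⟩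
      · intro p hp q hq hne
        rcases Finset.mem_insert.mp hp with rfl | hpold
        · rcases Finset.mem_insert.mp hq with rfl | hqold
          · exact absurd rfl hne
          · obtain ⟨hqP, hqn⟩ := Finset.mem_sdiff.mp hqold
            obtain ⟨col, hcolrb, hcol⟩ := huni q hqP hqn
            refine ⟨col, fun a ha z hz => ?_⟩
            rw [hsym a z, hcore q hqP hqn z hz a ha, hcol z hz]
        · rcases Finset.mem_insert.mp hq with rfl | hqold
          · obtain ⟨hpP, hpn⟩ := Finset.mem_sdiff.mp hpold
            obtain ⟨col, hcolrb, hcol⟩ := huni p hpP hpn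
            refine ⟨col, fun z hz a ha => ?_⟩
            rw [hcore p hpP hpn z hz a ha, hcol z hz]
          · exact hmono p ((Finset.mem_sdiff.mp hpold).1) q ((Finset.mem_sdiff.mp hqold).1) hne
      · refine ⟨r, b, ?_⟩
        intro p hp q hq hne a ha z hz
        rcases Finset.mem_insert.mp hp with rfl | hpold
        · rcases Finset.mem_insert.mp hq with rfl | hqold
          · exact absurd rfl hne
          · obtain ⟨hqP, hqn⟩ := Finset.mem_sdiff.mp hqold
            obtain ⟨col, hcolrb, hcol⟩ := huni q hqP hqn
            have : c a z = col := by
              rw [hsym a z, hcore q hqP hqn z hz a ha, hcol z hz]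
            rw [this]; exact hcolrb
        · rcases Finset.mem_insert.mp hq with rfl | hqold
          · obtain ⟨hpP, hpn⟩ := Finset.mem_sdiff.mp hpold
            obtain ⟨col, hcolrb, hcol⟩ := huni p hpP hpn
            have : c a z = col := by
              rw [hcore p hpP hpn a ha z hz, hcol a ha]
            rw [this]; exact hcolrb
          · exact hcols p ((Finset.mem_sdiff.mp hpold).1) q ((Finset.mem_sdiff.mp hqold).1) hne a ha z hz

end GR

open GR

lemma two_ne_aux {kk : ℕ} {c1 c2 : Fin kk} : ∀ u v w : Fin kk,
    (u = c1 ∨ u = c2) → (v = c1 ∨ v = c2) → (w = c1 ∨ w = c2) →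
    u ≠ v → u ≠ w → v = w := by
  rintro u v w (rfl | rfl) (rfl | rfl) (rfl | rfl) h1 h2 <;> simp_all

theorem upper (t kk : ℕ) (ht : 1 ≤ t) (N : ℕ) (hN : N = 5*t)
    (A : Finset (Fin N)) (hA : A.card = 2*t+1)
    (c : Option (Fin N) → Option (Fin N) → Fin kk)
    (hsym : ∀ a b, c a b = c b a)
    (hnr : ¬ RainbowTri (OAdj A) c) :
    ∃ i, MonoStar (OAdj A) c (2*t+1) i := by
  by_contra hM
  classical
  set c' : Fin N → Fin N → Fin kk := fun a b => c (some a) (some b) with hc'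
  have hsym' : ∀ a b : Fin N, c' a b = c' b a := fun a b => hsym _ _
  have hg : GallaiOn c' (Finset.univ : Finset (Fin N)) := by
    intro a _ b _ d _ hab had hbd
    by_contra hcon
    push_neg at hcon
    exact hnr ⟨some a, some b, some d, hab, had, hbd, hcon.1, hcon.2.1, hcon.2.2⟩
  have BD : ∀ (u : Option (Fin N)) (i : Fin kk) (T : Finset (Option (Fin N))),
      u ∉ T → (∀ w ∈ T, OAdj A u w ∧ c u w = i) → T.card ≤ 2*t := by
    intro u i T hu hT
    by_contra hlt
    push_neg at hlt
    obtain ⟨T', hT'sub, hT'card⟩ := Finset.exists_subset_card_eq (by omega : 2*t+1 ≤ T.card)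
    exact hM ⟨i, u, T', hT'card, fun h => hu (hT'sub h), fun w hw => hT w (hT'sub hw)⟩
  have CSb : ∀ (x : Fin N) (i : Fin kk),
      ((Finset.univ.filter (fun y => y ≠ x ∧ c' x y = i)).card ≤ 2*t) := by
    intro x i
    have h1 : some x ∉ (Finset.univ.filter (fun y => y ≠ x ∧ c' x y = i)).image some := by
      intro h
      obtain ⟨y, hy, hyx⟩ := Finset.mem_image.mp h
      exact (Finset.mem_filter.mp hy).2.1 (Option.some_injective _ hyx)
    have h2 : ∀ w ∈ (Finset.univ.filter (fun y => y ≠ x ∧ c' x y = i)).image some,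
        OAdj A (some x) w ∧ c (some x) w = i := by
      rintro w hw
      obtain ⟨y, hy, rfl⟩ := Finset.mem_image.mp hw
      obtain ⟨-, hne, heq⟩ := Finset.mem_filter.mp hy
      exact ⟨Ne.symm hne, heq⟩
    have := BD (some x) i _ h1 h2
    rwa [Finset.card_image_of_injective _ (Option.some_injective _)] at this
  obtain ⟨P, hP⟩ := gallai_thm c' hsym' N Finset.univ (by simp) (by simp; omega) hg
  obtain ⟨hcardP, hparts, hdisj, hcover, hmono, c1, c2, hcols⟩ := hP
  -- sum of part sizes
  have hcoverU : (Finset.univ : Finset (Fin N)) = P.biUnion id := by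
    apply Finset.Subset.antisymm
    · intro x hx
      obtain ⟨p, hp, hxp⟩ := hcover x hx
      exact Finset.mem_biUnion.mpr ⟨p, hp, hxp⟩
    · intro x _
      exact Finset.mem_univ x
  have hsum : ∑ p ∈ P, p.card = 5*t := by
    have h2 := Finset.card_biUnion (s := P) (t := id)
      (fun p hp q hq hne => hdisj p hp q hq hne)
    rw [← hcoverU] at h2
    have h3 : (Finset.univ : Finset (Fin N)).card = 5*t := by simp [hN]
    rw [h3] at h2
    simpa using h2.symm
  -- upper bound on part sizes
  have hup : ∀ p ∈ P, p.card ≤ 2*t := by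
    intro p hp
    obtain ⟨q, hq, hqp⟩ := Finset.exists_mem_ne hcardP p
    obtain ⟨y, hy⟩ := (hparts q hq).1
    obtain ⟨col, hcol⟩ := hmono q hq p hp hqp
    refine le_trans (Finset.card_le_card ?_) (CSb y col)
    intro u hu
    refine Finset.mem_filter.mpr ⟨Finset.mem_univ u, ?_, hcol y hy u hu⟩
    intro h
    exact (Finset.disjoint_left.mp (hdisj p hp q hq (Ne.symm hqp)) hu) (h ▸ hy)
  -- lower bound on part sizes
  have hlow : ∀ p ∈ P, t ≤ p.card := by
    intro p hp
    obtain ⟨x, hx⟩ := (hparts p hp).1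
    have hsub : Finset.univ \ p ⊆
        (Finset.univ.filter (fun y => y ≠ x ∧ c' x y = c1)) ∪
        (Finset.univ.filter (fun y => y ≠ x ∧ c' x y = c2)) := by
      intro y hy
      obtain ⟨-, hyp⟩ := Finset.mem_sdiff.mp hy
      obtain ⟨q, hq, hyq⟩ := hcover y (Finset.mem_univ y)
      have hqp : q ≠ p := fun h => hyp (h ▸ hyq)
      have hxy : y ≠ x := fun h => hyp (h ▸ hx)
      rcases hcols p hp q hq (Ne.symm hqp) x hx y hyq with h | h
      · exact Finset.mem_union_left _ (Finset.mem_filter.mpr ⟨Finset.mem_univ y, hxy, h⟩)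
      · exact Finset.mem_union_right _ (Finset.mem_filter.mpr ⟨Finset.mem_univ y, hxy, h⟩)
    have h1 := Finset.card_le_card hsub
    have h2 := Finset.card_union_le
      (Finset.univ.filter (fun y => y ≠ x ∧ c' x y = c1))
      (Finset.univ.filter (fun y => y ≠ x ∧ c' x y = c2))
    have h3 : (Finset.univ \ p).card = 5*t - p.card := by
      rw [Finset.card_sdiff_of_subset (Finset.subset_univ p)]; simp [hN]
    have h4 : p.card ≤ 5*t := by
      have := Finset.card_le_card (Finset.subset_univ p)
      simpa [hN] using this
    have := CSb x c1
    have := CSb x c2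
    omega
  -- number of parts
  have hql : P.card * t ≤ 5*t := by
    have := Finset.card_nsmul_le_sum P (fun p => p.card) t (fun p hp => hlow p hp)
    rw [smul_eq_mul] at this
    omega
  have hqu : 5*t ≤ P.card * (2*t) := by
    have := Finset.sum_le_card_nsmul P (fun p => p.card) (2*t) (fun p hp => hup p hp)
    rw [smul_eq_mul] at this
    omega
  have hq5' : P.card ≤ 5 := by
    by_contra h
    push_neg at h
    have : 6 * t ≤ P.card * t := Nat.mul_le_mul_right t (by omega)
    omega
  have hq3' : 3 ≤ P.card := by
    by_contra h
    push_neg at h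
    have : P.card * (2*t) ≤ 2 * (2*t) := Nat.mul_le_mul_right (2*t) (by omega)
    omega
  -- key counting lemma: a part seeing two others in the same color
  have key2 : ∀ p q r' : Finset (Fin N), p ∈ P → q ∈ P → r' ∈ P → p ≠ q → p ≠ r' → q ≠ r' →
      ∀ col, (∀ a ∈ p, ∀ b ∈ q, c' a b = col) → (∀ a ∈ p, ∀ b ∈ r', c' a b = col) →
      q.card + r'.card ≤ 2*t := by
    intro p q r' hp hq hr hpq hpr hqr col hcq hcr
    obtain ⟨x, hx⟩ := (hparts p hp).1
    have hsub : q ∪ r' ⊆ Finset.univ.filter (fun y => y ≠ x ∧ c' x y = col) := by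
      intro u hu
      rcases Finset.mem_union.mp hu with h | h
      · refine Finset.mem_filter.mpr ⟨Finset.mem_univ u, ?_, hcq x hx u h⟩
        intro he
        exact (Finset.disjoint_left.mp (hdisj q hq p hp (Ne.symm hpq)) h) (he ▸ hx)
      · refine Finset.mem_filter.mpr ⟨Finset.mem_univ u, ?_, hcr x hx u h⟩
        intro he
        exact (Finset.disjoint_left.mp (hdisj r' hr p hp (Ne.symm hpr)) h) (he ▸ hx)
    have h1 := Finset.card_le_card hsub
    rw [Finset.card_union_of_disjoint (hdisj q hq r' hr hqr)] at h1
    exact le_trans h1 (CSb x col)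
  have key3 : ∀ p q r' s' : Finset (Fin N), p ∈ P → q ∈ P → r' ∈ P → s' ∈ P →
      p ≠ q → p ≠ r' → p ≠ s' → q ≠ r' → q ≠ s' → r' ≠ s' →
      ∀ col, (∀ a ∈ p, ∀ b ∈ q, c' a b = col) → (∀ a ∈ p, ∀ b ∈ r', c' a b = col) →
      (∀ a ∈ p, ∀ b ∈ s', c' a b = col) →
      q.card + r'.card + s'.card ≤ 2*t := by
    intro p q r' s' hp hq hr hs hpq hpr hps hqr hqs hrs col hcq hcr hcs
    obtain ⟨x, hx⟩ := (hparts p hp).1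
    have hsub : q ∪ r' ∪ s' ⊆ Finset.univ.filter (fun y => y ≠ x ∧ c' x y = col) := by
      intro u hu
      have hne : ∀ w : Finset (Fin N), w ∈ P → w ≠ p → u ∈ w → u ≠ x :=
        fun w hw hwp huw he =>
          (Finset.disjoint_left.mp (hdisj w hw p hp hwp) huw) (he ▸ hx)
      rcases Finset.mem_union.mp hu with h | h
      · rcases Finset.mem_union.mp h with h' | h'
        · exact Finset.mem_filter.mpr ⟨Finset.mem_univ u, hne q hq (Ne.symm hpq) h', hcq x hx u h'⟩
        · exact Finset.mem_filter.mpr ⟨Finset.mem_univ u, hne r' hr (Ne.symm hpr) h', hcr x hx u h'⟩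
      · exact Finset.mem_filter.mpr ⟨Finset.mem_univ u, hne s' hs (Ne.symm hps) h, hcs x hx u h⟩
    have h1 := Finset.card_le_card hsub
    rw [Finset.card_union_of_disjoint, Finset.card_union_of_disjoint (hdisj q hq r' hr hqr)] at h1
    · exact le_trans h1 (CSb x col)
    · rw [Finset.disjoint_union_left]
      exact ⟨hdisj q hq s' hs hqs, hdisj r' hr s' hs hrs⟩
  -- helper facts
  have colmem : ∀ p q : Finset (Fin N), p ∈ P → q ∈ P → p ≠ q →
      ∀ col : Fin kk, (∀ a ∈ p, ∀ b ∈ q, c' a b = col) → (col = c1 ∨ col = c2) := by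
    intro p q hp hq hne col hcol
    obtain ⟨xp, hxp⟩ := (hparts p hp).1
    obtain ⟨xq, hxq⟩ := (hparts q hq).1
    have := hcols p hp q hq hne xp hxp xq hxq
    rwa [hcol xp hxp xq hxq] at this
  have hqcases : P.card = 3 ∨ P.card = 4 ∨ P.card = 5 := by omega
  rcases hqcases with hq | hq | hq
  · -- three parts
    obtain ⟨p1, p2, p3, h12, h13, h23, hPeq⟩ := Finset.card_eq_three.mp hq
    have hp1 : p1 ∈ P := by rw [hPeq]; simp
    have hp2 : p2 ∈ P := by rw [hPeq]; simp
    have hp3 : p3 ∈ P := by rw [hPeq]; simp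
    obtain ⟨col12, hcol12⟩ := hmono p1 hp1 p2 hp2 h12
    obtain ⟨col13, hcol13⟩ := hmono p1 hp1 p3 hp3 h13
    obtain ⟨col23, hcol23⟩ := hmono p2 hp2 p3 hp3 h23
    have m12 := colmem p1 p2 hp1 hp2 h12 col12 hcol12
    have m13 := colmem p1 p3 hp1 hp3 h13 col13 hcol13
    have m23 := colmem p2 p3 hp2 hp3 h23 col23 hcol23
    have hs3 : p1.card + p2.card + p3.card = 5*t := by
      rw [hPeq] at hsum
      rw [Finset.sum_insert (by simp [h12, h13]), Finset.sum_insert (by simp [h23]),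
        Finset.sum_singleton] at hsum
      omega
    have htwo : col12 = col13 ∨ col12 = col23 ∨ col13 = col23 := by
      rcases m12 with h | h <;> rcases m13 with h' | h' <;> rcases m23 with h'' | h'' <;>
        simp [h, h', h'']
    rcases htwo with h | h | h
    · have := key2 p1 p2 p3 hp1 hp2 hp3 h12 h13 h23 col12 hcol12
        (fun a ha b hb => by rw [hcol13 a ha b hb]; exact h.symm)
      have := hup p1 hp1
      omega
    · have := key2 p2 p1 p3 hp2 hp1 hp3 (Ne.symm h12) h23 h13 col12
        (fun a ha b hb => by rw [hsym' a b]; exact hcol12 b hb a ha)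
        (fun a ha b hb => by rw [hcol23 a ha b hb]; exact h.symm)
      have := hup p2 hp2
      omega
    · have := key2 p3 p1 p2 hp3 hp1 hp2 (Ne.symm h13) (Ne.symm h23) h12 col13
        (fun a ha b hb => by rw [hsym' a b]; exact hcol13 b hb a ha)
        (fun a ha b hb => by rw [hsym' a b, hcol23 b hb a ha]; exact h.symm)
      have := hup p3 hp3
      omega
  · -- four parts
    obtain ⟨h0, hh0P, hh0max⟩ := Finset.exists_max_image P (fun p => p.card)
      (Finset.card_pos.mp (by omega))
    have hsumle : ∑ p ∈ P, p.card ≤ 4 * h0.card := by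
      have := Finset.sum_le_card_nsmul P (fun p => p.card) h0.card
        (fun p hp => hh0max p hp)
      rw [smul_eq_mul, hq] at this
      omega
    have hh0big : t + 1 ≤ h0.card := by
      by_contra hcon
      push_neg at hcon
      omega
    have herase : (P.erase h0).card = 3 := by
      rw [Finset.card_erase_of_mem hh0P, hq]
    obtain ⟨la, lb, lc, hab', hac', hbc', heq⟩ := Finset.card_eq_three.mp herase
    have hla : la ∈ P ∧ la ≠ h0 := by
      have : la ∈ P.erase h0 := by rw [heq]; simp
      exact ⟨Finset.mem_of_mem_erase this, Finset.ne_of_mem_erase this⟩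
    have hlb : lb ∈ P ∧ lb ≠ h0 := by
      have : lb ∈ P.erase h0 := by rw [heq]; simp
      exact ⟨Finset.mem_of_mem_erase this, Finset.ne_of_mem_erase this⟩
    have hlc : lc ∈ P ∧ lc ≠ h0 := by
      have : lc ∈ P.erase h0 := by rw [heq]; simp
      exact ⟨Finset.mem_of_mem_erase this, Finset.ne_of_mem_erase this⟩
    have hs4 : h0.card + la.card + lb.card + lc.card = 5*t := by
      have hPe : P = insert h0 {la, lb, lc} := by
        rw [← heq, Finset.insert_erase hh0P]
      rw [hPe] at hsum
      rw [Finset.sum_insert (by simp [Ne.symm hla.2, Ne.symm hlb.2, Ne.symm hlc.2]),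
        Finset.sum_insert (by simp [hab', hac']), Finset.sum_insert (by simp [hbc']),
        Finset.sum_singleton] at hsum
      omega
    obtain ⟨colab, hcolab⟩ := hmono la hla.1 lb hlb.1 hab'
    obtain ⟨colac, hcolac⟩ := hmono la hla.1 lc hlc.1 hac'
    obtain ⟨colbc, hcolbc⟩ := hmono lb hlb.1 lc hlc.1 hbc'
    obtain ⟨colah, hcolah⟩ := hmono la hla.1 h0 hh0P hla.2
    obtain ⟨colbh, hcolbh⟩ := hmono lb hlb.1 h0 hh0P hlb.2
    obtain ⟨colch, hcolch⟩ := hmono lc hlc.1 h0 hh0P hlc.2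
    have mab := colmem la lb hla.1 hlb.1 hab' colab hcolab
    have mac := colmem la lc hla.1 hlc.1 hac' colac hcolac
    have mbc := colmem lb lc hlb.1 hlc.1 hbc' colbc hcolbc
    have mah := colmem la h0 hla.1 hh0P hla.2 colah hcolah
    have mbh := colmem lb h0 hlb.1 hh0P hlb.2 colbh hcolbh
    have mch := colmem lc h0 hlc.1 hh0P hlc.2 colch hcolch
    -- no cherry of a light part may contain h0
    have F1 : colah ≠ colab := by
      intro heq'
      have := key2 la h0 lb hla.1 hh0P hlb.1 hla.2 hab' (Ne.symm hlb.2) colah hcolah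
        (fun a' ha' b' hb' => by rw [hcolab a' ha' b' hb']; exact heq'.symm)
      have := hlow lb hlb.1
      omega
    have F2 : colah ≠ colac := by
      intro heq'
      have := key2 la h0 lc hla.1 hh0P hlc.1 hla.2 hac' (Ne.symm hlc.2) colah hcolah
        (fun a' ha' b' hb' => by rw [hcolac a' ha' b' hb']; exact heq'.symm)
      have := hlow lc hlc.1
      omega
    have F3 : colbh ≠ colab := by
      intro heq'
      have := key2 lb h0 la hlb.1 hh0P hla.1 hlb.2 (Ne.symm hab') (Ne.symm hla.2) colbh hcolbh
        (fun a' ha' b' hb' => by rw [hsym' a' b', hcolab b' hb' a' ha']; exact heq'.symm)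
      have := hlow la hla.1
      omega
    have F4 : colbh ≠ colbc := by
      intro heq'
      have := key2 lb h0 lc hlb.1 hh0P hlc.1 hlb.2 hbc' (Ne.symm hlc.2) colbh hcolbh
        (fun a' ha' b' hb' => by rw [hcolbc a' ha' b' hb']; exact heq'.symm)
      have := hlow lc hlc.1
      omega
    have F5 : colch ≠ colac := by
      intro heq'
      have := key2 lc h0 la hlc.1 hh0P hla.1 hlc.2 (Ne.symm hac') (Ne.symm hla.2) colch hcolch
        (fun a' ha' b' hb' => by rw [hsym' a' b', hcolac b' hb' a' ha']; exact heq'.symm)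
      have := hlow la hla.1
      omega
    have F6 : colch ≠ colbc := by
      intro heq'
      have := key2 lc h0 lb hlc.1 hh0P hlb.1 hlc.2 (Ne.symm hbc') (Ne.symm hlb.2) colch hcolch
        (fun a' ha' b' hb' => by rw [hsym' a' b', hcolbc b' hb' a' ha']; exact heq'.symm)
      have := hlow lb hlb.1
      omega
    have Gab_ac : colab = colac := two_ne_aux colah colab colac mah mab mac F1 F2
    have Gab_bc : colab = colbc := two_ne_aux colbh colab colbc mbh mab mbc F3 F4
    have Hbh : colbh = colah := two_ne_aux colab colbh colah mab mbh mah
      (fun h => F3 h.symm) (fun h => F1 h.symm)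
    have Hch : colch = colah := two_ne_aux colac colch colah mac mch mah
      (fun h => F5 h.symm) (fun h => F2 h.symm)
    have := key3 h0 la lb lc hh0P hla.1 hlb.1 hlc.1 (Ne.symm hla.2) (Ne.symm hlb.2)
      (Ne.symm hlc.2) hab' hac' hbc' colah
      (fun a' ha' b' hb' => by rw [hsym' a' b']; exact hcolah b' hb' a' ha')
      (fun a' ha' b' hb' => by rw [hsym' a' b', hcolbh b' hb' a' ha']; exact Hbh)
      (fun a' ha' b' hb' => by rw [hsym' a' b', hcolch b' hb' a' ha']; exact Hch)
    have := hup h0 hh0P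
    omega
  · -- five parts
    have hallt : ∀ p ∈ P, p.card = t := by
      intro p hp
      by_contra hne
      have hgt : t < p.card := lt_of_le_of_ne (hlow p hp) (Ne.symm hne)
      have hlt : ∑ q ∈ P, t < ∑ q ∈ P, q.card :=
        Finset.sum_lt_sum (fun i hi => hlow i hi) ⟨p, hp, hgt⟩
      rw [Finset.sum_const, hq, smul_eq_mul] at hlt
      omega
    have hc12 : c1 ≠ c2 := by
      intro he
      obtain ⟨p, hp⟩ := Finset.card_pos.mp (by omega : 0 < P.card)
      obtain ⟨x, hx⟩ := (hparts p hp).1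
      have hsub : Finset.univ \ p ⊆ Finset.univ.filter (fun y => y ≠ x ∧ c' x y = c1) := by
        intro y hy
        obtain ⟨-, hyp⟩ := Finset.mem_sdiff.mp hy
        obtain ⟨q, hq', hyq⟩ := hcover y (Finset.mem_univ y)
        have hqp : q ≠ p := fun h => hyp (h ▸ hyq)
        have hxy : y ≠ x := fun h => hyp (h ▸ hx)
        rcases hcols p hp q hq' (Ne.symm hqp) x hx y hyq with h | h
        · exact Finset.mem_filter.mpr ⟨Finset.mem_univ y, hxy, h⟩
        · exact Finset.mem_filter.mpr ⟨Finset.mem_univ y, hxy, he ▸ h⟩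
      have h1 := Finset.card_le_card hsub
      have h2 : (Finset.univ \ p).card = 5*t - p.card := by
        rw [Finset.card_sdiff_of_subset (Finset.subset_univ p)]
        have h5 : (Finset.univ : Finset (Fin N)).card = 5*t := by simp [hN]
        omega
      have := CSb x c1
      have := hallt p hp
      omega
    have hDcard : ∀ p ∈ P, ∀ x ∈ p, ∀ j : Fin kk, (j = c1 ∨ j = c2) →
        ((Finset.univ \ p).filter (fun y => c' x y = j)).card = 2*t := by
      intro p hp x hx j hj
      have hcov : Finset.univ \ p =
          ((Finset.univ \ p).filter (fun y => c' x y = c1)) ∪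
          ((Finset.univ \ p).filter (fun y => c' x y = c2)) := by
        apply Finset.Subset.antisymm
        · intro y hy
          obtain ⟨-, hyp⟩ := Finset.mem_sdiff.mp hy
          obtain ⟨q, hq', hyq⟩ := hcover y (Finset.mem_univ y)
          have hqp : q ≠ p := fun h => hyp (h ▸ hyq)
          rcases hcols p hp q hq' (Ne.symm hqp) x hx y hyq with h | h
          · exact Finset.mem_union_left _ (Finset.mem_filter.mpr ⟨hy, h⟩)
          · exact Finset.mem_union_right _ (Finset.mem_filter.mpr ⟨hy, h⟩)
        · intro y hy
          rcases Finset.mem_union.mp hy with h | h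
          · exact (Finset.mem_filter.mp h).1
          · exact (Finset.mem_filter.mp h).1
      have hdisjD : Disjoint ((Finset.univ \ p).filter (fun y => c' x y = c1))
          ((Finset.univ \ p).filter (fun y => c' x y = c2)) := by
        rw [Finset.disjoint_left]
        intro y hy1 hy2
        exact hc12 (by rw [← (Finset.mem_filter.mp hy1).2, (Finset.mem_filter.mp hy2).2])
      have hcard4 : (Finset.univ \ p).card = 4*t := by
        rw [Finset.card_sdiff_of_subset (Finset.subset_univ p)]
        have h5 : (Finset.univ : Finset (Fin N)).card = 5*t := by simp [hN]
        have := hallt p hp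
        omega
      have hbnd : ∀ j' : Fin kk, ((Finset.univ \ p).filter (fun y => c' x y = j')).card ≤ 2*t := by
        intro j'
        refine le_trans (Finset.card_le_card ?_) (CSb x j')
        intro y hy
        obtain ⟨hy', hcy⟩ := Finset.mem_filter.mp hy
        exact Finset.mem_filter.mpr ⟨Finset.mem_univ y,
          fun h => (Finset.mem_sdiff.mp hy').2 (h ▸ hx), hcy⟩
      have hu : ((Finset.univ \ p).filter (fun y => c' x y = c1)).card +
          ((Finset.univ \ p).filter (fun y => c' x y = c2)).card = 4*t := by
        rw [← Finset.card_union_of_disjoint hdisjD, ← hcov]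
        exact hcard4
      have hb1 := hbnd c1
      have hb2 := hbnd c2
      rcases hj with rfl | rfl <;> omega
    -- endgame with the star center
    by_cases hallA : ∀ a ∈ A, ∀ b ∈ A, c none (some a) = c none (some b)
    · obtain ⟨a0, ha0⟩ := Finset.card_pos.mp (by omega : 0 < A.card)
      apply hM
      refine ⟨c none (some a0), none, A.image some, ?_, ?_, ?_⟩
      · rw [Finset.card_image_of_injective _ (Option.some_injective _)]
        exact hA
      · intro h
        obtain ⟨y, hy, he⟩ := Finset.mem_image.mp h
        exact Option.some_ne_none _ he
      · rintro w hw
        obtain ⟨a', ha', rfl⟩ := Finset.mem_image.mp hw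
        exact ⟨ha', hallA a' ha' a0 ha0⟩
    · push_neg at hallA
      obtain ⟨a, ha, b, hb, hab⟩ := hallA
      have hKEY : ∀ x y : Fin N, x ∈ A → y ∈ A → c none (some x) ≠ c none (some y) →
          ∀ px py : Finset (Fin N), px ∈ P → py ∈ P → x ∈ px → y ∈ py → px = py := by
        intro x y hxA hyA hxy px py hpx hpy hxpx hypy
        by_contra hne
        have hxyne : x ≠ y := fun h => hxy (h ▸ rfl)
        obtain ⟨col, hcol⟩ := hmono px hpx py hpy hne
        have hcolm : col = c1 ∨ col = c2 := by
          have := hcols px hpx py hpy hne x hxpx y hypy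
          rwa [hcol x hxpx y hypy] at this
        have hcxy : c' x y = col := hcol x hxpx y hypy
        have hnr' : c none (some x) = c (some x) (some y) ∨
            c none (some y) = c (some x) (some y) := by
          by_contra hcon
          push_neg at hcon
          exact hnr ⟨none, some x, some y, hxA, hyA, hxyne, hxy, hcon.1, hcon.2⟩
        rcases hnr' with hcase | hcase
        · have hD := hDcard px hpx x hxpx col hcolm
          have h1 : (some x) ∉ insert (none : Option (Fin N))
              (((Finset.univ \ px).filter (fun y' => c' x y' = col)).image some) := by
            intro h
            rcases Finset.mem_insert.mp h with h' | h'
            · exact Option.some_ne_none _ h'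
            · obtain ⟨y', hy', he⟩ := Finset.mem_image.mp h'
              have hyx : y' = x := Option.some_injective _ he
              exact (Finset.mem_sdiff.mp (Finset.mem_filter.mp hy').1).2 (hyx ▸ hxpx)
          have h2 : ∀ w ∈ insert (none : Option (Fin N))
              (((Finset.univ \ px).filter (fun y' => c' x y' = col)).image some),
              OAdj A (some x) w ∧ c (some x) w = col := by
            rintro w hw
            rcases Finset.mem_insert.mp hw with rfl | h'
            · refine ⟨hxA, ?_⟩
              rw [hsym (some x) none, hcase]
              exact hcxy
            · obtain ⟨y', hy', rfl⟩ := Finset.mem_image.mp h'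
              obtain ⟨hy's, hcy'⟩ := Finset.mem_filter.mp hy'
              refine ⟨?_, hcy'⟩
              intro he
              exact (Finset.mem_sdiff.mp hy's).2 (he ▸ hxpx)
          have hcount := BD (some x) col _ h1 h2
          rw [Finset.card_insert_of_notMem (by
              intro h
              obtain ⟨y', hy', he⟩ := Finset.mem_image.mp h
              exact Option.some_ne_none _ he),
            Finset.card_image_of_injective _ (Option.some_injective _), hD] at hcount
          omega
        · have hcyx : c' y x = col := by rw [hsym' y x]; exact hcxy
          have hD := hDcard py hpy y hypy col hcolm
          have h1 : (some y) ∉ insert (none : Option (Fin N))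
              (((Finset.univ \ py).filter (fun x' => c' y x' = col)).image some) := by
            intro h
            rcases Finset.mem_insert.mp h with h' | h'
            · exact Option.some_ne_none _ h'
            · obtain ⟨x', hx', he⟩ := Finset.mem_image.mp h'
              have hyx : x' = y := Option.some_injective _ he
              exact (Finset.mem_sdiff.mp (Finset.mem_filter.mp hx').1).2 (hyx ▸ hypy)
          have h2 : ∀ w ∈ insert (none : Option (Fin N))
              (((Finset.univ \ py).filter (fun x' => c' y x' = col)).image some),
              OAdj A (some y) w ∧ c (some y) w = col := by
            rintro w hw
            rcases Finset.mem_insert.mp hw with rfl | h'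
            · refine ⟨hyA, ?_⟩
              rw [hsym (some y) none, hcase]
              rw [hsym (some x) (some y)]
              exact hcyx
            · obtain ⟨x', hx', rfl⟩ := Finset.mem_image.mp h'
              obtain ⟨hx's, hcx'⟩ := Finset.mem_filter.mp hx'
              refine ⟨?_, hcx'⟩
              intro he
              exact (Finset.mem_sdiff.mp hx's).2 (he ▸ hypy)
          have hcount := BD (some y) col _ h1 h2
          rw [Finset.card_insert_of_notMem (by
              intro h
              obtain ⟨x', hx', he⟩ := Finset.mem_image.mp h
              exact Option.some_ne_none _ he),
            Finset.card_image_of_injective _ (Option.some_injective _), hD] at hcount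
          omega
      obtain ⟨pa, hpa, hapa⟩ := hcover a (Finset.mem_univ a)
      obtain ⟨pb, hpb, hbpb⟩ := hcover b (Finset.mem_univ b)
      have hpab : pa = pb := hKEY a b ha hb hab pa pb hpa hpb hapa hbpb
      have hsubA : A ⊆ pa := by
        intro z hz
        obtain ⟨pz, hpz, hzpz⟩ := hcover z (Finset.mem_univ z)
        by_cases hza : c none (some z) = c none (some a)
        · have h1 : c none (some z) ≠ c none (some b) := by rw [hza]; exact hab
          have hzb := hKEY z b hz hb h1 pz pb hpz hpb hzpz hbpb
          rw [hpab, ← hzb]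
          exact hzpz
        · have hza' := hKEY z a hz ha hza pz pa hpz hpa hzpz hapa
          rw [← hza']
          exact hzpz
      have hcl := Finset.card_le_card hsubA
      have := hallt pa hpa
      omega



def gcol (kk : ℕ) (hkk : 3 ≤ kk) (px py : ℕ) : Fin kk :=
  if px = py then ⟨2, by omega⟩
  else if (py + 5 - px) % 5 = 1 ∨ (py + 5 - px) % 5 = 4 then ⟨0, by omega⟩
  else ⟨1, by omega⟩

def gfun (t kk N : ℕ) (hkk : 3 ≤ kk) : Option (Fin N) → Option (Fin N) → Fin kk
  | some x, some y => gcol kk hkk (x.val / t) (y.val / t)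
  | _, _ => ⟨2, by omega⟩

lemma gcol_symm (kk : ℕ) (hkk : 3 ≤ kk) (px py : ℕ) (hx : px < 5) (hy : py < 5) :
    gcol kk hkk px py = gcol kk hkk py px := by
  unfold gcol
  split_ifs <;> simp [Fin.ext_iff] <;> omega

lemma gcol_same (kk : ℕ) (hkk : 3 ≤ kk) {px py : ℕ} (h : px = py) :
    gcol kk hkk px py = ⟨2, by omega⟩ := by
  unfold gcol; rw [if_pos h]

lemma gcol_cases (kk : ℕ) (hkk : 3 ≤ kk) {px py : ℕ} (h : px ≠ py) :
    gcol kk hkk px py = ⟨0, by omega⟩ ∨ gcol kk hkk px py = ⟨1, by omega⟩ := by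
  unfold gcol
  rw [if_neg h]
  by_cases h2 : (py + 5 - px) % 5 = 1 ∨ (py + 5 - px) % 5 = 4
  · rw [if_pos h2]; left; rfl
  · rw [if_neg h2]; right; rfl

lemma gfun_none_left (t kk N : ℕ) (hkk : 3 ≤ kk) (w : Option (Fin N)) :
    gfun t kk N hkk none w = ⟨2, by omega⟩ := by
  cases w <;> rfl

lemma gfun_none_right (t kk N : ℕ) (hkk : 3 ≤ kk) (w : Option (Fin N)) :
    gfun t kk N hkk w none = ⟨2, by omega⟩ := by
  cases w <;> rfl

theorem lower (t kk : ℕ) (ht : 1 ≤ t) (hkk : 3 ≤ kk) (N : ℕ) (hN : N = 5*t)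
    (s : ℕ) (hs : s ≤ 2*t) :
    ∃ A : Finset (Fin N), A.card = s ∧
      ∃ c : Option (Fin N) → Option (Fin N) → Fin kk,
      (∀ a b, c a b = c b a) ∧ ¬ RainbowTri (OAdj A) c ∧
      ¬ ∃ i, MonoStar (OAdj A) c (2*t+1) i := by
  classical
  have hsN : ∀ m ∈ Finset.range s, m < N := by
    intro m hm
    have := Finset.mem_range.mp hm
    omega
  refine ⟨(Finset.range s).attachFin hsN, by rw [Finset.card_attachFin, Finset.card_range], ?_⟩
  set A := (Finset.range s).attachFin hsN with hAdef
  have hpt5 : ∀ x : Fin N, x.val / t < 5 := by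
    intro x
    rw [Nat.div_lt_iff_lt_mul ht]
    have := x.isLt
    omega
  have hgsome : ∀ x y : Fin N,
      gfun t kk N hkk (some x) (some y) = gcol kk hkk (x.val / t) (y.val / t) :=
    fun x y => rfl
  have hsym : ∀ a b, gfun t kk N hkk a b = gfun t kk N hkk b a := by
    intro a b
    cases a with
    | none => rw [gfun_none_left, gfun_none_right]
    | some x =>
      cases b with
      | none => rw [gfun_none_left, gfun_none_right]
      | some y =>
        rw [hgsome, hgsome, gcol_symm kk hkk _ _ (hpt5 x) (hpt5 y)]
  refine ⟨gfun t kk N hkk, hsym, ?_, ?_⟩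
  · -- no rainbow triangle
    rintro ⟨a, b, d, hadj1, hadj2, hadj3, hn1, hn2, hn3⟩
    cases a with
    | none => exact hn1 (by rw [gfun_none_left, gfun_none_left])
    | some x =>
      cases b with
      | none => exact hn2 (by rw [gfun_none_right, gfun_none_left])
      | some y =>
        cases d with
        | none => exact hn3 (by rw [gfun_none_right, gfun_none_right])
        | some z =>
          rw [hgsome] at hn1 hn2
          rw [hgsome] at hn1 hn3
          rw [hgsome] at hn2 hn3
          by_cases hxy : x.val / t = y.val / t
          · apply hn3
            unfold gcol
            rw [hxy]
          · by_cases hxz : x.val / t = z.val / t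
            · apply hn2
              rw [gcol_symm kk hkk _ _ (hpt5 x) (hpt5 y)]
              unfold gcol
              rw [hxz]
            · by_cases hyz : y.val / t = z.val / t
              · apply hn1
                unfold gcol
                rw [hyz]
              · have m1 := gcol_cases kk hkk hxy
                have m2 := gcol_cases kk hkk hxz
                have m3 := gcol_cases kk hkk hyz
                rcases m1 with h1 | h1 <;> rcases m2 with h2 | h2 <;> rcases m3 with h3 | h3 <;>
                  first
                    | exact hn1 (h1.trans h2.symm)
                    | exact hn2 (h1.trans h3.symm)
                    | exact hn3 (h2.trans h3.symm)
  · -- no mono star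
    -- counting lemmas
    have CNT : ∀ j, j < 5 →
        (Finset.univ.filter (fun y : Fin N => y.val / t = j)).card = t := by
      intro j hj
      have base : ∀ z : ℕ, z ∈ Finset.range t → j*t + z < N := by
        intro z hz
        have hz' := Finset.mem_range.mp hz
        have h1 : j*t ≤ 4*t := Nat.mul_le_mul_right t (by omega)
        omega
      have hbij : (Finset.univ.filter (fun y : Fin N => y.val / t = j)).card =
          (Finset.range t).card := by
        refine Finset.card_bij' (fun y _ => y.val - j*t)
          (fun z hz => (⟨j*t + z, base z hz⟩ : Fin N)) ?_ ?_ ?_ ?_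
        · intro y hy
          obtain ⟨-, hjy⟩ := Finset.mem_filter.mp hy
          have h1 : j*t ≤ y.val := by
            rw [← hjy]
            exact Nat.div_mul_le_self y.val t
          have h2 : y.val < (j+1)*t := by
            rw [← Nat.div_lt_iff_lt_mul ht, hjy]
            omega
          have h2' : (j+1)*t = j*t + t := by ring
          show y.val - j*t ∈ Finset.range t
          rw [Finset.mem_range]
          omega
        · intro z hz
          refine Finset.mem_filter.mpr ⟨Finset.mem_univ _, ?_⟩
          show (j*t + z) / t = j
          rw [mul_comm, Nat.mul_add_div ht, Nat.div_eq_of_lt (Finset.mem_range.mp hz)]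
          omega
        · intro y hy
          obtain ⟨-, hjy⟩ := Finset.mem_filter.mp hy
          have h1 : j*t ≤ y.val := by
            rw [← hjy]
            exact Nat.div_mul_le_self y.val t
          apply Fin.ext
          show j*t + (y.val - j*t) = y.val
          omega
        · intro z hz
          show j*t + z - j*t = z
          omega
      rw [hbij, Finset.card_range]
    have CNT2 : ∀ j1 j2, j1 < 5 → j2 < 5 → j1 ≠ j2 →
        (Finset.univ.filter (fun y : Fin N => y.val / t = j1 ∨ y.val / t = j2)).card = 2*t := by
      intro j1 j2 hj1 hj2 hne
      have : Finset.univ.filter (fun y : Fin N => y.val / t = j1 ∨ y.val / t = j2) =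
          (Finset.univ.filter (fun y : Fin N => y.val / t = j1)) ∪
          (Finset.univ.filter (fun y : Fin N => y.val / t = j2)) := by
        ext y
        simp only [Finset.mem_filter, Finset.mem_union, Finset.mem_univ, true_and]
      rw [this, Finset.card_union_of_disjoint, CNT j1 hj1, CNT j2 hj2]
      · omega
      · rw [Finset.disjoint_left]
        intro y hy1 hy2
        exact hne ((Finset.mem_filter.mp hy1).2.symm.trans (Finset.mem_filter.mp hy2).2)
    rintro ⟨i, v, S, hcard, hvS, hall⟩
    cases v with
    | none =>
      have hsub : S ⊆ A.image some := by
        intro u hu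
        cases u with
        | none => exact absurd (hall none hu).1 (by intro h; exact h)
        | some y => exact Finset.mem_image_of_mem some (hall (some y) hu).1
      have := Finset.card_le_card hsub
      rw [hcard, Finset.card_image_of_injective _ (Option.some_injective _),
        Finset.card_attachFin, Finset.card_range] at this
      omega
    | some x =>
      have hx5 := hpt5 x
      obtain ⟨u0, hu0⟩ := Finset.card_pos.mp (by omega : 0 < S.card)
      have hi : i = (⟨0, by omega⟩ : Fin kk) ∨ i = (⟨1, by omega⟩ : Fin kk) ∨
          i = (⟨2, by omega⟩ : Fin kk) := by
        have := (hall u0 hu0).2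
        cases u0 with
        | none =>
          rw [gfun_none_right] at this
          right; right; exact this.symm
        | some y =>
          rw [hgsome] at this
          by_cases h : x.val / t = y.val / t
          · right; right
            rw [← this, gcol_same kk hkk h]
          · rcases gcol_cases kk hkk h with h' | h'
            · left; rw [← this, h']
            · right; left; rw [← this, h']
      rcases hi with rfl | rfl | rfl
      · -- color 0 : the "distance 1/4" neighbours, 2t of them
        have hsub : S ⊆ (Finset.univ.filter (fun y : Fin N =>
            y.val / t = (x.val / t + 1) % 5 ∨ y.val / t = (x.val / t + 4) % 5)).image some := by
          intro u hu
          obtain ⟨hadj, hcu⟩ := hall u hu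
          cases u with
          | none =>
            rw [gfun_none_right] at hcu
            exact absurd hcu (by simp only [Fin.mk.injEq]; omega)
          | some y =>
            rw [hgsome] at hcu
            have hy5 := hpt5 y
            have hne : x.val / t ≠ y.val / t := by
              intro h
              rw [gcol_same kk hkk h] at hcu
              simp only [Fin.mk.injEq] at hcu
              omega
            apply Finset.mem_image_of_mem
            refine Finset.mem_filter.mpr ⟨Finset.mem_univ _, ?_⟩
            unfold gcol at hcu
            rw [if_neg hne] at hcu
            have e1 : x.val / t < 5 := hpt5 x
            generalize hP : x.val / t = pp at e1 hne hcu ⊢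
            generalize hQ : y.val / t = qq at hy5 hne hcu ⊢
            by_cases h2 : (qq + 5 - pp) % 5 = 1 ∨ (qq + 5 - pp) % 5 = 4
            · rcases h2 with h2 | h2
              · left; omega
              · right; omega
            · rw [if_neg h2] at hcu
              simp only [Fin.mk.injEq] at hcu
              omega
        have hle := Finset.card_le_card hsub
        rw [hcard, Finset.card_image_of_injective _ (Option.some_injective _),
          CNT2 _ _ (Nat.mod_lt _ (by omega)) (Nat.mod_lt _ (by omega)) (by omega)] at hle
        omega
      · -- color 1 : distance 2/3 neighbours
        have hsub : S ⊆ (Finset.univ.filter (fun y : Fin N =>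
            y.val / t = (x.val / t + 2) % 5 ∨ y.val / t = (x.val / t + 3) % 5)).image some := by
          intro u hu
          obtain ⟨hadj, hcu⟩ := hall u hu
          cases u with
          | none =>
            rw [gfun_none_right] at hcu
            exact absurd hcu (by simp only [Fin.mk.injEq]; omega)
          | some y =>
            rw [hgsome] at hcu
            have hy5 := hpt5 y
            have hne : x.val / t ≠ y.val / t := by
              intro h
              rw [gcol_same kk hkk h] at hcu
              simp only [Fin.mk.injEq] at hcu
              omega
            apply Finset.mem_image_of_mem
            refine Finset.mem_filter.mpr ⟨Finset.mem_univ _, ?_⟩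
            unfold gcol at hcu
            rw [if_neg hne] at hcu
            have e1 : x.val / t < 5 := hpt5 x
            generalize hP : x.val / t = pp at e1 hne hcu ⊢
            generalize hQ : y.val / t = qq at hy5 hne hcu ⊢
            by_cases h2 : (qq + 5 - pp) % 5 = 1 ∨ (qq + 5 - pp) % 5 = 4
            · rw [if_pos h2] at hcu
              simp only [Fin.mk.injEq] at hcu
              omega
            · push_neg at h2
              by_cases h3 : (qq + 5 - pp) % 5 = 2
              · left; omega
              · right; omega
        have hle := Finset.card_le_card hsub
        rw [hcard, Finset.card_image_of_injective _ (Option.some_injective _),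
          CNT2 _ _ (Nat.mod_lt _ (by omega)) (Nat.mod_lt _ (by omega)) (by omega)] at hle
        omega
      · -- color 2 : same part (≤ t-1) plus possibly none
        have hsub : S ⊆ insert none ((Finset.univ.filter
            (fun y : Fin N => y.val / t = x.val / t ∧ y ≠ x)).image some) := by
          intro u hu
          obtain ⟨hadj, hcu⟩ := hall u hu
          cases u with
          | none => exact Finset.mem_insert_self _ _
          | some y =>
            rw [hgsome] at hcu
            have hyx : y ≠ x := by
              intro h
              exact hadj (by rw [h])
            have hsame : y.val / t = x.val / t := by
              by_contra h
              rcases gcol_cases kk hkk (fun h' => h h'.symm) with h' | h' <;>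
                rw [h'] at hcu <;> simp only [Fin.mk.injEq] at hcu <;> omega
            refine Finset.mem_insert_of_mem (Finset.mem_image_of_mem some
              (Finset.mem_filter.mpr ⟨Finset.mem_univ _, hsame, hyx⟩))
        have hfX : (Finset.univ.filter
            (fun y : Fin N => y.val / t = x.val / t ∧ y ≠ x)) =
            (Finset.univ.filter (fun y : Fin N => y.val / t = x.val / t)).erase x := by
          ext y
          simp only [Finset.mem_filter, Finset.mem_erase, Finset.mem_univ, true_and]
          tauto
        have hle := Finset.card_le_card hsub
        have hcX : ((Finset.univ.filter
            (fun y : Fin N => y.val / t = x.val / t ∧ y ≠ x)).image some).card = t - 1 := by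
          have hxmem : x ∈ Finset.univ.filter (fun y : Fin N => y.val / t = x.val / t) :=
            Finset.mem_filter.mpr ⟨Finset.mem_univ _, rfl⟩
          rw [Finset.card_image_of_injective _ (Option.some_injective _), hfX,
            Finset.card_erase_of_mem hxmem, CNT _ hx5]
        rw [hcard] at hle
        have hin := Finset.card_insert_le (none : Option (Fin N))
          ((Finset.univ.filter
            (fun y : Fin N => y.val / t = x.val / t ∧ y ≠ x)).image some)
        omega


theorem stmt15 (k m : ℕ) (hk : 3 ≤ k) (hm : 3 ≤ m) (hodd : Odd m) :
    IsLeast {s | ∀ A : Finset (Fin ((5 * m - 3) / 2 - 1)), A.card = s →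
      ∀ c : Option (Fin ((5 * m - 3) / 2 - 1)) →
            Option (Fin ((5 * m - 3) / 2 - 1)) → Fin k,
        (∀ a b, c a b = c b a) →
        RainbowTri (OAdj A) c ∨ ∃ i, MonoStar (OAdj A) c m i} m := by
  obtain ⟨t, htm⟩ := hodd
  have ht : 1 ≤ t := by omega
  have hm' : m = 2*t + 1 := by omega
  have hN : (5 * m - 3) / 2 - 1 = 5*t := by omega
  constructor
  · intro A hA c hsym
    by_contra hcon
    push_neg at hcon
    obtain ⟨hnr, hnm⟩ := hcon
    obtain ⟨i, hi⟩ := upper t k ht _ hN A (by omega) c hsym hnr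
    rw [← hm'] at hi
    exact hnm i hi
  · intro s hsmem
    by_contra hlt
    push_neg at hlt
    have hs2t : s ≤ 2*t := by omega
    obtain ⟨A, hAcard, c, hsym, hnr, hnm⟩ := lower t k ht hk _ hN s hs2t
    rcases hsmem A hAcard c hsym with h | h
    · exact hnr h
    · obtain ⟨i, hi⟩ := h
      exact hnm ⟨i, by rw [← hm']; exact hi⟩
end
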